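/- arXiv:1606.02129 — 4 statements merged into one kernel-verified Lean document; each statement's English description precedes it below -/
import Mathlib

section
/- (Laplace's method) Let −∞ ≤ a < 0 < b ≤ +∞ and let h : (a,b) → ℝ have at least two continuous derivatives. Suppose 0 is the global maximum point of h with h(0) = 0, suppose h''(0) < 0, suppose that for every δ > 0 there exists η(δ) > 0 such that h(x) < −η(δ) for all x ∈ (a,b) with x ∉ [−δ, δ], and suppose ∫_a^b e^{h(x)} dx < ∞. Then ∫_a^b e^{t·h(x)} dx is asymptotically equal to √(−2π/(h''(0)·t)) as t → ∞; that is, the ratio of the two quantities tends to 1 as t → ∞. -/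
open MeasureTheory Real Set Filter

lemma laplace_aux_exp_sqrt {K : ℝ} (hK : 0 < K) :
    Tendsto (fun t : ℝ => Real.exp (-(K * t)) * Real.sqrt t) atTop (nhds 0) := by
  have h1 : Tendsto (fun t : ℝ => Real.exp (-(K * t)) * t) atTop (nhds 0) := by
    have h2 : Tendsto (fun t : ℝ => K * t) atTop atTop :=
      Tendsto.const_mul_atTop hK tendsto_id
    have h3 := (tendsto_pow_mul_exp_neg_atTop_nhds_zero 1).comp h2
    have h4 := h3.const_mul (1 / K)
    rw [mul_zero] at h4
    refine h4.congr fun t => ?_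
    simp only [Function.comp, pow_one]
    field_simp
  apply squeeze_zero' (g := fun t => Real.exp (-(K * t)) * t)
  · filter_upwards [eventually_ge_atTop (0:ℝ)] with t ht
    positivity
  · filter_upwards [eventually_ge_atTop (1:ℝ)] with t ht
    apply mul_le_mul_of_nonneg_left _ (Real.exp_pos _).le
    rw [Real.sqrt_le_left (by linarith)]
    nlinarith
  · exact h1

set_option maxHeartbeats 1000000 in
/-- **Laplace's method.** `S` is the open interval `(a,b)` with `a < 0 < b`,
where `a, b` may be infinite (elements of `EReal`). -/
theorem laplace_method (a b : EReal) (ha : a < 0) (hb : 0 < b)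
    (h : ℝ → ℝ)
    (S : Set ℝ) (hS : S = {x : ℝ | a < (x : EReal) ∧ (x : EReal) < b})
    (hsmooth : ContDiffOn ℝ 2 h S)
    (hmax : ∀ x ∈ S, h x ≤ h 0) (h0 : h 0 = 0)
    (hsecond : deriv (deriv h) 0 < 0)
    (hsep : ∀ δ > (0:ℝ), ∃ η > (0:ℝ), ∀ x ∈ S, x ∉ Icc (-δ) δ → h x < -η)
    (hint : IntegrableOn (fun x => Real.exp (h x)) S) :
    Tendsto (fun t : ℝ =>
        (∫ x in S, Real.exp (t * h x)) /
          Real.sqrt (-(2 * Real.pi) / (deriv (deriv h) 0 * t)))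
      atTop (nhds 1) := by
  -- basic setup
  have hSopen : IsOpen S := by
    rw [hS]
    exact isOpen_Ioo.preimage continuous_coe_real_ereal
  have h0S : (0:ℝ) ∈ S := by
    rw [hS]; simp only [mem_setOf_eq, EReal.coe_zero]; exact ⟨ha, hb⟩
  have hSm : MeasurableSet S := hSopen.measurableSet
  have hcont : ContinuousOn h S := hsmooth.continuousOn
  have hnonpos : ∀ x ∈ S, h x ≤ 0 := fun x hx => h0 ▸ hmax x hx
  set Q := deriv (deriv h) 0 with hQ
  have hQneg : Q < 0 := hsecond
  set c : ℝ := -Q / 2 with hcdef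
  have hc : 0 < c := by rw [hcdef]; linarith
  have hQc : Q = -(2 * c) := by rw [hcdef]; ring
  have hden : ∀ t : ℝ, -(2 * π) / (Q * t) = π / (c * t) := by
    intro t
    rw [hQc, show -(2 * c) * t = -(2 * (c * t)) by ring, neg_div_neg_eq,
      mul_div_mul_left _ _ (two_ne_zero)]
  simp only [hden]
  -- integrability of exp (t * h) on S for t ≥ 1
  have hInt : ∀ t : ℝ, 1 ≤ t → IntegrableOn (fun x => Real.exp (t * h x)) S := by
    intro t ht
    have hm : AEStronglyMeasurable (fun x => Real.exp (t * h x)) (volume.restrict S) :=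
      (Real.continuous_exp.comp_continuousOn
        (continuousOn_const.mul hcont)).aestronglyMeasurable hSm
    refine Integrable.mono hint hm ?_
    rw [ae_restrict_iff' hSm]
    filter_upwards with x hx
    have h1 : h x ≤ 0 := hnonpos x hx
    rw [Real.norm_eq_abs, Real.norm_eq_abs, abs_of_pos (Real.exp_pos _),
      abs_of_pos (Real.exp_pos _)]
    exact Real.exp_le_exp.2 (by nlinarith)
  -- Taylor estimate
  have taylor : ∀ ε > (0:ℝ), ∃ δ > (0:ℝ), Icc (-δ) δ ⊆ S ∧
      ∀ x ∈ Icc (-δ) δ, |h x + c * x ^ 2| ≤ ε * x ^ 2 := by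
    intro ε hε
    have hd1 : ContDiffOn ℝ 1 (deriv h) S :=
      hsmooth.deriv_of_isOpen hSopen (by norm_num)
    have hcontd : ContinuousOn (deriv h) S := hd1.continuousOn
    have hdiffS : ∀ y ∈ S, HasDerivAt h (deriv h y) y := fun y hy =>
      ((hsmooth.differentiableOn (by norm_num) y hy).differentiableAt
        (hSopen.mem_nhds hy)).hasDerivAt
    have hdd : HasDerivAt (deriv h) Q 0 :=
      ((hd1.differentiableOn one_ne_zero 0 h0S).differentiableAt
        (hSopen.mem_nhds h0S)).hasDerivAt
    have hd0 : deriv h 0 = 0 := by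
      have hloc : IsLocalMax h 0 := by
        filter_upwards [hSopen.mem_nhds h0S] with x hx using hmax x hx
      exact hloc.deriv_eq_zero
    have hlo := (hasDerivAt_iff_isLittleO.mp hdd).def hε
    rw [Metric.eventually_nhds_iff] at hlo
    obtain ⟨δ₁, hδ₁, hball1⟩ := hlo
    obtain ⟨δ₂, hδ₂, hball2⟩ := Metric.isOpen_iff.mp hSopen 0 h0S
    set δ := min (δ₁ / 2) (δ₂ / 2) with hδdef
    have hδpos : 0 < δ := by positivity
    have hsubS : Icc (-δ) δ ⊆ S := by
      intro x hx
      apply hball2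
      rw [Metric.mem_ball, Real.dist_eq, sub_zero]
      have h1 : |x| ≤ δ := abs_le.2 ⟨hx.1, hx.2⟩
      have h2 : δ ≤ δ₂ / 2 := min_le_right _ _
      linarith
    refine ⟨δ, hδpos, hsubS, ?_⟩
    intro x hx
    have hxabs : |x| ≤ δ := abs_le.2 ⟨hx.1, hx.2⟩
    have habs : ∀ y ∈ uIcc (0:ℝ) x, |y| ≤ |x| := by
      intro y hy
      rcases le_total 0 x with hx0 | hx0
      · rw [uIcc_of_le hx0] at hy
        rw [abs_of_nonneg hy.1, abs_of_nonneg hx0]; exact hy.2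
      · rw [uIcc_of_ge hx0] at hy
        rw [abs_of_nonpos hy.2, abs_of_nonpos hx0]; linarith [hy.1]
    have hxS : uIcc (0:ℝ) x ⊆ S := by
      intro y hy
      apply hball2
      rw [Metric.mem_ball, Real.dist_eq, sub_zero]
      have := habs y hy
      have h2 : δ ≤ δ₂ / 2 := min_le_right _ _
      linarith
    have hFTC : ∫ y in (0:ℝ)..x, deriv h y = h x - h 0 :=
      intervalIntegral.integral_eq_sub_of_hasDerivAt
        (fun y hy => hdiffS y (hxS hy))
        ((hcontd.mono hxS).intervalIntegrable)
    have hint2 : IntervalIntegrable (fun y => Q * y) volume 0 x :=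
      (continuous_const.mul continuous_id).intervalIntegrable _ _
    have hQint : ∫ y in (0:ℝ)..x, Q * y = Q * (x ^ 2 / 2) := by
      rw [intervalIntegral.integral_const_mul, integral_id]
      ring
    have hsplit : ∫ y in (0:ℝ)..x, (deriv h y - Q * y) = h x + c * x ^ 2 := by
      rw [intervalIntegral.integral_sub ((hcontd.mono hxS).intervalIntegrable) hint2,
        hFTC, hQint, h0, hQc]
      ring
    have hbound : ∀ y ∈ uIoc (0:ℝ) x, ‖deriv h y - Q * y‖ ≤ ε * |x| := by
      intro y hy
      have hy' : y ∈ uIcc (0:ℝ) x := Ioc_subset_Icc_self hy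
      have h1 : |y| ≤ |x| := habs y hy'
      have h2 : dist y 0 < δ₁ := by
        rw [Real.dist_eq, sub_zero]
        have h3 : δ ≤ δ₁ / 2 := min_le_left _ _
        linarith
      have h4 := hball1 h2
      simp only [sub_zero, smul_eq_mul, hd0, sub_zero, Real.norm_eq_abs] at h4
      calc ‖deriv h y - Q * y‖ = |deriv h y - y * Q| := by
            rw [Real.norm_eq_abs]; ring_nf
        _ ≤ ε * |y| := h4
        _ ≤ ε * |x| := by nlinarith [abs_nonneg y]
    have hnorm := intervalIntegral.norm_integral_le_of_norm_le_const hbound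
    rw [hsplit, Real.norm_eq_abs] at hnorm
    have hxx : |x| * |x| = x ^ 2 := by rw [abs_mul_abs_self]; ring
    calc |h x + c * x ^ 2| ≤ ε * |x| * |x - 0| := hnorm
      _ = ε * x ^ 2 := by rw [sub_zero, mul_assoc, hxx]
  -- main argument
  rw [Metric.tendsto_nhds]
  intro ε hε
  have t1 : Tendsto (fun u : ℝ => Real.sqrt (c / (c + u))) (nhds 0) (nhds 1) := by
    have hco : ContinuousAt (fun u : ℝ => Real.sqrt (c / (c + u))) 0 := by
      apply Real.continuous_sqrt.continuousAt.comp
      exact ContinuousAt.div continuousAt_const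
        ((continuous_const.add continuous_id).continuousAt) (by simpa using hc.ne')
    have h1 := hco.tendsto
    simpa [div_self hc.ne'] using h1
  have t2 : Tendsto (fun u : ℝ => Real.sqrt (c / (c - u))) (nhds 0) (nhds 1) := by
    have hco : ContinuousAt (fun u : ℝ => Real.sqrt (c / (c - u))) 0 := by
      apply Real.continuous_sqrt.continuousAt.comp
      exact ContinuousAt.div continuousAt_const
        ((continuous_const.sub continuous_id).continuousAt) (by simpa using hc.ne')
    have h1 := hco.tendsto
    simpa [div_self hc.ne'] using h1
  have hev1 := (Metric.tendsto_nhds.mp t1) (ε / 2) (by linarith)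
  have hev2 := (Metric.tendsto_nhds.mp t2) (ε / 2) (by linarith)
  have hev3 : ∀ᶠ u : ℝ in nhds 0, u < c / 2 := Iio_mem_nhds (by linarith)
  have hex : ∃ u : ℝ, (dist (Real.sqrt (c / (c + u))) 1 < ε / 2 ∧
      dist (Real.sqrt (c / (c - u))) 1 < ε / 2 ∧ u < c / 2) ∧ 0 < u := by
    have h4 := ((hev1.and (hev2.and hev3)).filter_mono
      (nhdsWithin_le_nhds (s := Ioi (0:ℝ))))
    have h5 := h4.and (eventually_mem_nhdsWithin (s := Ioi (0:ℝ)) (a := 0))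
    obtain ⟨u, ⟨h6, h7, h8⟩, h9⟩ := h5.exists
    exact ⟨u, ⟨h6, h7, h8⟩, h9⟩
  obtain ⟨ε', ⟨hd1', hd2', hε'c⟩, hε'pos⟩ := hex
  obtain ⟨δ, hδ, hsub, htay⟩ := taylor ε' hε'pos
  obtain ⟨η, hηpos, hsepδ⟩ := hsep δ hδ
  set k₁ := c + ε' with hk₁
  set k₂ := c - ε' with hk₂
  have hk₁pos : 0 < k₁ := by rw [hk₁]; linarith
  have hk₂pos : 0 < k₂ := by rw [hk₂]; linarith
  set C := ∫ x in S, Real.exp (h x) with hCdef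
  have hC0 : 0 ≤ C := setIntegral_nonneg hSm fun x _ => (Real.exp_pos _).le
  -- error terms tend to zero
  have herr1 : Tendsto (fun t : ℝ =>
      Real.exp (-(t * (k₁ * δ ^ 2 / 2))) * Real.sqrt (2 * c / k₁)) atTop (nhds 0) := by
    have h1 : Tendsto (fun t : ℝ => t * (k₁ * δ ^ 2 / 2)) atTop atTop :=
      Tendsto.atTop_mul_const (by positivity) tendsto_id
    have h2 := Real.tendsto_exp_atBot.comp (tendsto_neg_atTop_atBot.comp h1)
    have h3 := h2.mul_const (Real.sqrt (2 * c / k₁))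
    rw [zero_mul] at h3
    exact h3
  have herr2 : Tendsto (fun t : ℝ =>
      C * Real.exp (-((t - 1) * η)) * Real.sqrt (c * t / π)) atTop (nhds 0) := by
    have base := laplace_aux_exp_sqrt hηpos
    have h1 := base.const_mul (C * Real.exp η * Real.sqrt (c / π))
    rw [mul_zero] at h1
    apply h1.congr'
    filter_upwards [eventually_ge_atTop (0:ℝ)] with t ht
    rw [show -((t - 1) * η) = η + -(η * t) by ring, Real.exp_add,
      show c * t / π = c / π * t by ring, Real.sqrt_mul (by positivity : (0:ℝ) ≤ c / π) t]
    ring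
  have hev4 := herr1.eventually_lt_const (by linarith : (0:ℝ) < ε / 2)
  have hev5 := herr2.eventually_lt_const (by linarith : (0:ℝ) < ε / 2)
  filter_upwards [eventually_ge_atTop (1:ℝ), eventually_gt_atTop (0:ℝ), hev4, hev5]
    with t ht1 ht0 he1 he2
  set D := Real.sqrt (π / (c * t)) with hDdef
  have hDpos : 0 < D := Real.sqrt_pos.2 (by positivity)
  have hi := hInt t ht1
  have hratio : ∀ p : ℝ, 0 < p → Real.sqrt (π / p) / D = Real.sqrt (c * t / p) := by
    intro p hp
    rw [hDdef, ← Real.sqrt_div (by positivity : (0:ℝ) ≤ π / p)]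
    congr 1
    field_simp
  have h1D : 1 / D = Real.sqrt (c * t / π) := by
    rw [hDdef, one_div, ← Real.sqrt_inv, inv_div]
  -- gaussian tail estimates
  have htail : ∀ k : ℝ, 0 < k →
      (Real.sqrt (π / (t * k)) - Real.exp (-(t * (k * δ ^ 2 / 2))) *
        Real.sqrt (π / (t * k / 2))
        ≤ ∫ x in Icc (-δ) δ, Real.exp (-(t * k) * x ^ 2)) ∧
      ((∫ x in Icc (-δ) δ, Real.exp (-(t * k) * x ^ 2)) ≤ Real.sqrt (π / (t * k))) := by
    intro k hk
    have hb : 0 < t * k := by positivity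
    have hg : Integrable (fun x : ℝ => Real.exp (-(t * k) * x ^ 2)) :=
      integrable_exp_neg_mul_sq hb
    constructor
    · have hcompl : (∫ x in (Icc (-δ) δ)ᶜ, Real.exp (-(t * k) * x ^ 2))
          ≤ Real.exp (-(t * (k * δ ^ 2 / 2))) * Real.sqrt (π / (t * k / 2)) := by
        have hg2 : Integrable (fun x : ℝ =>
            Real.exp (-(t * (k * δ ^ 2 / 2))) * Real.exp (-(t * k / 2) * x ^ 2)) :=
          (integrable_exp_neg_mul_sq (by positivity)).const_mul _
        have step1 : (∫ x in (Icc (-δ) δ)ᶜ, Real.exp (-(t * k) * x ^ 2))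
            ≤ ∫ x in (Icc (-δ) δ)ᶜ,
                Real.exp (-(t * (k * δ ^ 2 / 2))) * Real.exp (-(t * k / 2) * x ^ 2) := by
          apply setIntegral_mono_on hg.integrableOn hg2.integrableOn
            measurableSet_Icc.compl
          intro x hx
          rw [← Real.exp_add]
          apply Real.exp_le_exp.2
          have hx' : x < -δ ∨ δ < x := by
            by_contra hcon
            push_neg at hcon
            exact hx (Set.mem_Icc.mpr ⟨hcon.1, hcon.2⟩)
          have hxd : δ ^ 2 ≤ x ^ 2 := by
            rcases hx' with h' | h' <;> nlinarith
          nlinarith [mul_nonneg (by positivity : (0:ℝ) ≤ t * k / 2)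
            (by linarith : (0:ℝ) ≤ x ^ 2 - δ ^ 2)]
        refine step1.trans ?_
        rw [integral_const_mul]
        apply mul_le_mul_of_nonneg_left _ (Real.exp_pos _).le
        rw [← integral_gaussian (t * k / 2)]
        exact setIntegral_le_integral (integrable_exp_neg_mul_sq (by positivity))
          (Eventually.of_forall fun x => (Real.exp_pos _).le)
      have hsum := integral_add_compl (measurableSet_Icc (a := -δ) (b := δ)) hg
      rw [integral_gaussian] at hsum
      linarith
    · rw [← integral_gaussian (t * k)]
      exact setIntegral_le_integral hg (Eventually.of_forall fun x => (Real.exp_pos _).le)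
  -- splitting the integral
  have hIccInt : IntegrableOn (fun x => Real.exp (t * h x)) (Icc (-δ) δ) :=
    hi.mono_set hsub
  have hsplitI : (∫ x in S, Real.exp (t * h x))
      = (∫ x in Icc (-δ) δ, Real.exp (t * h x))
        + ∫ x in S \ Icc (-δ) δ, Real.exp (t * h x) := by
    rw [← integral_inter_add_diff measurableSet_Icc hi, Set.inter_eq_right.mpr hsub]
  -- lower bound
  have hlow1 : (∫ x in Icc (-δ) δ, Real.exp (-(t * k₁) * x ^ 2))
      ≤ ∫ x in Icc (-δ) δ, Real.exp (t * h x) := by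
    apply setIntegral_mono_on
      (integrable_exp_neg_mul_sq (by positivity)).integrableOn hIccInt measurableSet_Icc
    intro x hx
    apply Real.exp_le_exp.2
    have htx := htay x hx
    have hx2 : -k₁ * x ^ 2 ≤ h x := by
      rw [hk₁]
      have := (abs_le.1 htx).1
      nlinarith
    nlinarith [mul_le_mul_of_nonneg_left hx2 ht0.le]
  have hlow2 : (0:ℝ) ≤ ∫ x in S \ Icc (-δ) δ, Real.exp (t * h x) :=
    setIntegral_nonneg (hSm.diff measurableSet_Icc) fun x _ => (Real.exp_pos _).le
  have hlowI : Real.sqrt (π / (t * k₁)) - Real.exp (-(t * (k₁ * δ ^ 2 / 2))) *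
      Real.sqrt (π / (t * k₁ / 2)) ≤ ∫ x in S, Real.exp (t * h x) := by
    have := (htail k₁ hk₁pos).1
    rw [hsplitI]
    linarith
  -- upper bound
  have hup1 : (∫ x in Icc (-δ) δ, Real.exp (t * h x)) ≤ Real.sqrt (π / (t * k₂)) := by
    refine le_trans ?_ (htail k₂ hk₂pos).2
    apply setIntegral_mono_on hIccInt
      (integrable_exp_neg_mul_sq (by positivity)).integrableOn measurableSet_Icc
    intro x hx
    apply Real.exp_le_exp.2
    have htx := htay x hx
    have hx2 : h x ≤ -k₂ * x ^ 2 := by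
      rw [hk₂]
      have := (abs_le.1 htx).2
      nlinarith
    nlinarith [mul_le_mul_of_nonneg_left hx2 ht0.le]
  have hup2 : (∫ x in S \ Icc (-δ) δ, Real.exp (t * h x))
      ≤ Real.exp (-((t - 1) * η)) * C := by
    have step1 : (∫ x in S \ Icc (-δ) δ, Real.exp (t * h x))
        ≤ ∫ x in S \ Icc (-δ) δ, Real.exp (-((t - 1) * η)) * Real.exp (h x) := by
      apply setIntegral_mono_on (hi.mono_set diff_subset)
        ((hint.mono_set diff_subset).const_mul _) (hSm.diff measurableSet_Icc)
      intro x hx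
      rw [← Real.exp_add]
      apply Real.exp_le_exp.2
      have hhx := hsepδ x hx.1 hx.2
      nlinarith [mul_le_mul_of_nonneg_left hhx.le (by linarith : (0:ℝ) ≤ t - 1)]
    refine step1.trans ?_
    rw [integral_const_mul]
    apply mul_le_mul_of_nonneg_left _ (Real.exp_pos _).le
    exact setIntegral_mono_set hint
      (Eventually.of_forall fun x => (Real.exp_pos _).le)
      (HasSubset.Subset.eventuallyLE diff_subset)
  have hupI : (∫ x in S, Real.exp (t * h x))
      ≤ Real.sqrt (π / (t * k₂)) + Real.exp (-((t - 1) * η)) * C := by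
    rw [hsplitI]; linarith
  -- put everything together
  set I := ∫ x in S, Real.exp (t * h x) with hIdef
  have hlowD : Real.sqrt (c / k₁)
      - Real.exp (-(t * (k₁ * δ ^ 2 / 2))) * Real.sqrt (2 * c / k₁) ≤ I / D := by
    have hdiv : (Real.sqrt (π / (t * k₁)) - Real.exp (-(t * (k₁ * δ ^ 2 / 2))) *
        Real.sqrt (π / (t * k₁ / 2))) / D ≤ I / D := by
      gcongr
    rw [sub_div, mul_div_assoc, hratio (t * k₁) (by positivity),
      hratio (t * k₁ / 2) (by positivity)] at hdiv
    rw [show c * t / (t * k₁) = c / k₁ by field_simp,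
      show c * t / (t * k₁ / 2) = 2 * c / k₁ by field_simp] at hdiv
    exact hdiv
  have hupD : I / D ≤ Real.sqrt (c / k₂)
      + C * Real.exp (-((t - 1) * η)) * Real.sqrt (c * t / π) := by
    have hdiv : I / D ≤ (Real.sqrt (π / (t * k₂))
        + Real.exp (-((t - 1) * η)) * C) / D := by
      gcongr
    rw [add_div, mul_div_assoc, hratio (t * k₂) (by positivity)] at hdiv
    rw [show c * t / (t * k₂) = c / k₂ by field_simp] at hdiv
    calc I / D ≤ Real.sqrt (c / k₂) + Real.exp (-((t - 1) * η)) * (C / D) := hdiv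
      _ = Real.sqrt (c / k₂) + C * Real.exp (-((t - 1) * η)) * Real.sqrt (c * t / π) := by
          rw [div_eq_mul_one_div C D, h1D]; ring
  -- conclude
  rw [Real.dist_eq] at hd1' hd2' ⊢
  rw [abs_sub_lt_iff] at hd1' hd2' ⊢
  constructor
  · linarith [hd2'.1, he2]
  · linarith [hd1'.2, he1]
end

section
/- Fix p > 0 and let J_{a,p} = ∫_0^∞ t^a e^{−t^p/p} dt. Then J_{a,p} is asymptotically equal to √(2π/p) · a^{1/p − 1/2} · a^{a/p} · e^{−a/p} as a → ∞; that is, J_{a,p} / (√(2π/p) · a^{1/p − 1/2} · a^{a/p} · e^{−a/p}) → 1 as a → ∞. -/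
open MeasureTheory Real Set Filter Topology Nat

/-- `Jint p a = ∫_0^∞ t^a e^{-t^p/p} dt`. -/
noncomputable def Jint (p a : ℝ) : ℝ := ∫ t in Ioi (0:ℝ), t ^ a * Real.exp (-(t ^ p) / p)

lemma Gamma_interp {u v : ℝ} (hu : 0 < u) (huv : u ≤ v) (hv : v ≤ u + 1) :
    Real.Gamma v ≤ Real.Gamma u * u ^ (v - u) := by
  set θ := v - u with hθ
  have hθ0 : 0 ≤ θ := sub_nonneg.2 huv
  have hθ1 : 0 ≤ 1 - θ := by simp only [hθ]; linarith
  have hmem : (u : ℝ) ∈ Ioi (0:ℝ) := hu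
  have hmem1 : (u + 1 : ℝ) ∈ Ioi (0:ℝ) := by simp only [mem_Ioi]; linarith
  have h := Real.convexOn_log_Gamma.2 hmem hmem1 hθ1 hθ0 (by ring)
  have hcomb : (1 - θ) • u + θ • (u + 1) = v := by simp [smul_eq_mul, hθ]; ring
  rw [hcomb] at h
  have hΓu : 0 < Real.Gamma u := Real.Gamma_pos_of_pos hu
  have hΓu1 : Real.Gamma (u + 1) = u * Real.Gamma u := Real.Gamma_add_one hu.ne'
  simp only [Function.comp] at h
  rw [hΓu1, Real.log_mul hu.ne' hΓu.ne'] at h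
  have hlog : Real.log (Real.Gamma v) ≤ Real.log (Real.Gamma u * u ^ θ) := by
    rw [Real.log_mul hΓu.ne' (Real.rpow_pos_of_pos hu θ).ne', Real.log_rpow hu]
    simp only [smul_eq_mul] at h; nlinarith [h]
  have hΓv : 0 < Real.Gamma v := Real.Gamma_pos_of_pos (lt_of_lt_of_le hu huv)
  exact (Real.log_le_log_iff hΓv (by positivity)).mp hlog

lemma Jint_eq {p : ℝ} (hp : 0 < p) {a : ℝ} (ha : -1 < a) :
    Jint p a = p ^ ((a+1)/p - 1) * Real.Gamma ((a+1)/p) := by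
  have hb : (0:ℝ) < 1/p := by positivity
  have : Jint p a = ∫ t in Ioi (0:ℝ), t ^ a * Real.exp (-(1/p) * t ^ p) := by
    unfold Jint
    congr 1 with t
    rw [neg_div, neg_mul, one_div, inv_mul_eq_div]
  rw [this, integral_rpow_mul_exp_neg_mul_rpow hp ha hb, one_div, Real.inv_rpow hp.le,
    ← Real.rpow_neg hp.le, neg_div, neg_neg, Real.rpow_sub hp, Real.rpow_one,
    div_eq_mul_inv]
  ring

noncomputable def Dfun (x : ℝ) : ℝ := Real.sqrt (2*π) * x ^ (x - 1/2) * Real.exp (-x)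

noncomputable def cseq (n : ℕ) : ℝ :=
  (n ! : ℝ) / (Real.sqrt (2*π) * (n:ℝ) ^ ((n:ℝ) + 1/2) * Real.exp (-(n:ℝ)))

lemma cseq_tendsto : Tendsto cseq atTop (𝓝 1) := by
  have h1 : Tendsto (fun n => Stirling.stirlingSeq n / Real.sqrt π) atTop (𝓝 1) := by
    have := Stirling.tendsto_stirlingSeq_sqrt_pi.div_const (Real.sqrt π)
    rwa [div_self (by positivity : Real.sqrt π ≠ 0)] at this
  refine h1.congr' ?_
  filter_upwards [eventually_ge_atTop 1] with n hn
  have hn0 : (0:ℝ) < n := by exact_mod_cast hn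
  rw [Stirling.stirlingSeq, cseq, div_div]
  congr 1
  have he : Real.exp (-(n:ℝ)) = (Real.exp 1 ^ n)⁻¹ := by
    rw [← Real.exp_nat_mul, mul_one, Real.exp_neg]
  rw [Real.rpow_add hn0, Real.rpow_natCast, ← Real.sqrt_eq_rpow, div_pow, he,
    Real.sqrt_mul (by norm_num : (0:ℝ) ≤ 2) π, Real.sqrt_mul (by norm_num : (0:ℝ) ≤ 2) (n:ℝ)]
  have h1 : (0:ℝ) < Real.exp 1 ^ n := by positivity
  field_simp

lemma log_Dfun {x : ℝ} (hx : 0 < x) :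
    Real.log (Dfun x) = Real.log (Real.sqrt (2*π)) + (x - 1/2) * Real.log x + -x := by
  unfold Dfun
  rw [Real.log_mul (by positivity) (Real.exp_pos _).ne',
    Real.log_mul (by positivity) (Real.rpow_pos_of_pos hx _).ne',
    Real.log_rpow hx, Real.log_exp]

lemma Gratio_bounds {x : ℝ} (hx : 1 ≤ x) :
    cseq ⌊x⌋₊ * Real.exp (-(1/(2*⌊x⌋₊))) ≤ Real.Gamma x / Dfun x ∧
      Real.Gamma x / Dfun x ≤ cseq ⌊x⌋₊ * Real.exp (1/(2*⌊x⌋₊)) := by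
  set n := ⌊x⌋₊ with hn
  have hn1 : 1 ≤ n := Nat.le_floor (by exact_mod_cast hx)
  have hnx : (n:ℝ) ≤ x := Nat.floor_le (by linarith)
  have hxn : x < n + 1 := Nat.lt_floor_add_one x
  have hnpos : (0:ℝ) < n := by exact_mod_cast hn1
  have hxpos : (0:ℝ) < x := by linarith
  have hD : 0 < Dfun x := by unfold Dfun; positivity
  set Sn : ℝ := Real.sqrt (2*π) * (n:ℝ) ^ ((n:ℝ) + 1/2) * Real.exp (-(n:ℝ)) with hSn
  have hS : (0:ℝ) < Sn := by rw [hSn]; positivity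
  have hlogS : Real.log Sn = Real.log (Real.sqrt (2*π)) + ((n:ℝ) + 1/2) * Real.log n + -(n:ℝ) := by
    rw [hSn, Real.log_mul (by positivity) (Real.exp_pos _).ne',
      Real.log_mul (by positivity) (Real.rpow_pos_of_pos hnpos _).ne',
      Real.log_rpow hnpos, Real.log_exp]
  have hΓn : 0 < Real.Gamma n := Real.Gamma_pos_of_pos hnpos
  have hfact : (n ! : ℝ) = (n:ℝ) * Real.Gamma n := by
    rw [← Real.Gamma_nat_eq_factorial, Real.Gamma_add_one hnpos.ne']
  -- log estimates
  have hquot : (0:ℝ) < x / n := by positivity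
  have hub' : (Real.log x - Real.log n) * n ≤ x - n := by
    have h := Real.log_le_sub_one_of_pos hquot
    rw [Real.log_div hxpos.ne' hnpos.ne'] at h
    rw [← le_div_iff₀ hnpos, ← div_sub_one hnpos.ne']
    exact h
  have hlb' : x - (n:ℝ) ≤ (Real.log x - Real.log n) * x := by
    have h := Real.one_sub_inv_le_log_of_pos hquot
    rw [Real.log_div hxpos.ne' hnpos.ne', inv_div] at h
    rw [← div_le_iff₀ hxpos, ← one_sub_div hxpos.ne']
    exact h
  have hinv : (2*(n:ℝ)) * (1/(2*(n:ℝ))) = 1 := by field_simp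
  have hI : (0:ℝ) < 1/(2*(n:ℝ)) := by positivity
  constructor
  · -- lower bound
    have key : (n ! : ℝ) * x ^ (x - n - 1) ≤ Real.Gamma x := by
      have h2 := Gamma_interp hxpos (by linarith : x ≤ (n:ℝ)+1) (by linarith)
      rw [← Real.Gamma_nat_eq_factorial]
      calc Real.Gamma ((n:ℝ)+1) * x ^ (x - n - 1)
          ≤ Real.Gamma x * x ^ ((n:ℝ) + 1 - x) * x ^ (x - n - 1) := by
            apply mul_le_mul_of_nonneg_right h2 (Real.rpow_nonneg hxpos.le _)
        _ = Real.Gamma x := by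
            rw [mul_assoc, ← Real.rpow_add hxpos,
              show (↑n + 1 - x + (x - ↑n - 1) : ℝ) = 0 by ring, Real.rpow_zero, mul_one]
    have hmain : Real.exp (-(1/(2*(n:ℝ)))) * Dfun x ≤ x ^ (x - n - 1) * Sn := by
      rw [← Real.log_le_log_iff (by positivity) (mul_pos (Real.rpow_pos_of_pos hxpos _) hS),
        Real.log_mul (Real.exp_pos _).ne' hD.ne',
        Real.log_mul (Real.rpow_pos_of_pos hxpos _).ne' hS.ne',
        Real.log_exp, Real.log_rpow hxpos, log_Dfun hxpos, hlogS]
      nlinarith [hub', hlb', hinv, hI, hnpos, hnx, hxn, hxpos,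
        mul_le_mul_of_nonneg_left hub' (by norm_num : (0:ℝ) ≤ 1/2)]
    rw [cseq, le_div_iff₀ hD, div_mul_eq_mul_div, div_mul_eq_mul_div, div_le_iff₀ hS]
    calc (n ! : ℝ) * Real.exp (-(1/(2*(n:ℝ)))) * Dfun x
        = (n ! : ℝ) * (Real.exp (-(1/(2*(n:ℝ)))) * Dfun x) := by ring
      _ ≤ (n ! : ℝ) * (x ^ (x - n - 1) * Sn) := by
          exact mul_le_mul_of_nonneg_left hmain (by positivity)
      _ = ((n ! : ℝ) * x ^ (x - n - 1)) * Sn := by ring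
      _ ≤ Real.Gamma x * Sn := mul_le_mul_of_nonneg_right key hS.le
  · -- upper bound
    have key2 : Real.Gamma x ≤ Real.Gamma n * (n:ℝ) ^ (x - n) :=
      Gamma_interp hnpos hnx (by linarith)
    have hmain : (n:ℝ) ^ (x - n) * Sn ≤ (n:ℝ) * Real.exp (1/(2*(n:ℝ))) * Dfun x := by
      rw [← Real.log_le_log_iff (mul_pos (Real.rpow_pos_of_pos hnpos _) hS) (by positivity),
        Real.log_mul (Real.rpow_pos_of_pos hnpos _).ne' hS.ne',
        Real.log_mul (by positivity : ((n:ℝ) * Real.exp (1/(2*(n:ℝ)))) ≠ 0) hD.ne',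
        Real.log_mul hnpos.ne' (Real.exp_pos _).ne',
        Real.log_exp, Real.log_rpow hnpos, log_Dfun hxpos, hlogS]
      nlinarith [hub', hlb', hinv, hI, hnpos, hnx, hxn, hxpos,
        mul_le_mul_of_nonneg_left hub' (by norm_num : (0:ℝ) ≤ 1/2)]
    rw [div_le_iff₀ hD]
    refine key2.trans ?_
    rw [cseq, hfact, div_mul_eq_mul_div, div_mul_eq_mul_div, le_div_iff₀ hS]
    calc Real.Gamma n * (n:ℝ) ^ (x - n) * Sn
        = Real.Gamma n * ((n:ℝ) ^ (x - n) * Sn) := by ring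
      _ ≤ Real.Gamma n * ((n:ℝ) * Real.exp (1/(2*(n:ℝ))) * Dfun x) :=
          mul_le_mul_of_nonneg_left hmain hΓn.le
      _ = (n:ℝ) * Real.Gamma n * Real.exp (1/(2*(n:ℝ))) * Dfun x := by ring

lemma tendsto_Gratio : Tendsto (fun x : ℝ => Real.Gamma x / Dfun x) atTop (𝓝 1) := by
  have h2n : Tendsto (fun n : ℕ => 2*(n:ℝ)) atTop atTop :=
    (tendsto_natCast_atTop_atTop).const_mul_atTop two_pos
  have hI0 : Tendsto (fun n : ℕ => 1/(2*(n:ℝ))) atTop (𝓝 0) := by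
    have h := h2n.inv_tendsto_atTop
    refine h.congr fun n => ?_
    simp [one_div]
  have hexp : Tendsto (fun n : ℕ => Real.exp (-(1/(2*(n:ℝ))))) atTop (𝓝 1) := by
    have h0 : Tendsto (fun n : ℕ => -(1/(2*(n:ℝ)))) atTop (𝓝 0) := by
      simpa using hI0.neg
    have := (Real.continuous_exp.tendsto 0).comp h0
    simpa [Function.comp_def] using this
  have hexp' : Tendsto (fun n : ℕ => Real.exp (1/(2*(n:ℝ)))) atTop (𝓝 1) := by
    have := (Real.continuous_exp.tendsto 0).comp hI0
    simpa [Function.comp_def] using this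
  have hlo : Tendsto (fun n : ℕ => cseq n * Real.exp (-(1/(2*(n:ℝ))))) atTop (𝓝 1) := by
    simpa using cseq_tendsto.mul hexp
  have hhi : Tendsto (fun n : ℕ => cseq n * Real.exp (1/(2*(n:ℝ)))) atTop (𝓝 1) := by
    simpa using cseq_tendsto.mul hexp'
  refine tendsto_of_tendsto_of_tendsto_of_le_of_le'
    (hlo.comp tendsto_nat_floor_atTop) (hhi.comp tendsto_nat_floor_atTop) ?_ ?_
  · filter_upwards [eventually_ge_atTop (1:ℝ)] with x hx
    exact (Gratio_bounds hx).1
  · filter_upwards [eventually_ge_atTop (1:ℝ)] with x hx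
    exact (Gratio_bounds hx).2

lemma tendsto_residual {p : ℝ} (hp : 0 < p) :
    Tendsto (fun a : ℝ => ((a+1)/a) ^ ((a+1)/p - 1/2) * Real.exp (-(1/p))) atTop (𝓝 1) := by
  have hE : Tendsto (fun a : ℝ => (((a+1)/p - 1/2)/a) * (a * Real.log (1 + 1/a)))
      atTop (𝓝 ((1/p) * 1)) := by
    refine Tendsto.mul ?_ ?_
    · have h0 : Tendsto (fun a : ℝ => 1/p + (1/p - 1/2) * a⁻¹) atTop (𝓝 (1/p)) := by
        simpa using ((tendsto_inv_atTop_zero.const_mul (1/p - 1/2)).const_add (1/p))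
      refine h0.congr' ?_
      filter_upwards [eventually_gt_atTop (0:ℝ)] with a ha
      field_simp
      ring
    · simpa using Real.tendsto_mul_log_one_add_div_atTop 1
  have hE' : Tendsto (fun a : ℝ => ((a+1)/p - 1/2) * Real.log ((a+1)/a)) atTop (𝓝 (1/p)) := by
    rw [show (1/p : ℝ) = (1/p) * 1 by ring]
    refine hE.congr' ?_
    filter_upwards [eventually_gt_atTop (0:ℝ)] with a ha
    rw [show (1 + 1/a : ℝ) = (a+1)/a by field_simp]
    field_simp
  have := ((Real.continuous_exp.tendsto _).comp hE').mul
    (tendsto_const_nhds (x := Real.exp (-(1/p))))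
  rw [show Real.exp (1/p) * Real.exp (-(1/p)) = 1 by rw [← Real.exp_add]; simp] at this
  refine this.congr' ?_
  filter_upwards [eventually_gt_atTop (0:ℝ)] with a ha
  have hb : (0:ℝ) < (a+1)/a := by positivity
  simp only [Function.comp]
  rw [Real.rpow_def_of_pos hb, mul_comm (Real.log _)]

lemma key_ident {p : ℝ} (hp : 0 < p) {a : ℝ} (ha : 0 < a) :
    p ^ ((a+1)/p - 1) * Dfun ((a+1)/p) =
      (Real.sqrt (2 * Real.pi / p) * a ^ (1/p - 1/2) * a ^ (a/p) * Real.exp (-a/p)) *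
        (((a+1)/a) ^ ((a+1)/p - 1/2) * Real.exp (-(1/p))) := by
  have ha1 : (0:ℝ) < a + 1 := by linarith
  have hx : (0:ℝ) < (a+1)/p := by positivity
  have hq : (0:ℝ) < (a+1)/a := by positivity
  have hpi : (0:ℝ) < 2 * Real.pi / p := by positivity
  have hDfx : 0 < Dfun ((a+1)/p) := by unfold Dfun; positivity
  have hL : 0 < p ^ ((a+1)/p - 1) * Dfun ((a+1)/p) := by positivity
  have hR : 0 < (Real.sqrt (2 * Real.pi / p) * a ^ (1/p - 1/2) * a ^ (a/p) * Real.exp (-a/p)) *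
        (((a+1)/a) ^ ((a+1)/p - 1/2) * Real.exp (-(1/p))) := by positivity
  apply Real.log_injOn_pos (Set.mem_Ioi.2 hL) (Set.mem_Ioi.2 hR)
  rw [Real.log_mul (by positivity) hDfx.ne', log_Dfun hx, Real.log_rpow hp,
    Real.log_mul (by positivity) (by positivity),
    Real.log_mul (by positivity) (by positivity),
    Real.log_mul (by positivity) (by positivity),
    Real.log_mul (by positivity) (by positivity),
    Real.log_mul (by positivity) (by positivity),
    Real.log_exp, Real.log_exp, Real.log_rpow ha, Real.log_rpow ha, Real.log_rpow hq,
    Real.log_sqrt (by positivity : (0:ℝ) ≤ 2*π), Real.log_sqrt hpi.le,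
    Real.log_div (by positivity : (2*π : ℝ) ≠ 0) hp.ne',
    Real.log_div ha1.ne' hp.ne', Real.log_div ha1.ne' ha.ne']
  field_simp
  ring

/-- Asymptotics of `J_{a,p}` as `a → ∞`. -/
theorem Jint_asymptotics (p : ℝ) (hp : 0 < p) :
    Tendsto (fun a : ℝ =>
        Jint p a /
          (Real.sqrt (2 * Real.pi / p) * a ^ (1/p - 1/2) * a ^ (a/p) * Real.exp (-a/p)))
      atTop (nhds 1) := by
  have hxa : Tendsto (fun a : ℝ => (a+1)/p) atTop atTop :=
    (tendsto_atTop_add_const_right atTop 1 tendsto_id).atTop_div_const hp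
  have h1 : Tendsto (fun a : ℝ => Real.Gamma ((a+1)/p) / Dfun ((a+1)/p)) atTop (𝓝 1) :=
    tendsto_Gratio.comp hxa
  have h2 := tendsto_residual hp
  have h3 := h1.mul h2
  rw [one_mul] at h3
  refine h3.congr' ?_
  filter_upwards [eventually_gt_atTop (0:ℝ)] with a ha
  have hx : (0:ℝ) < (a+1)/p := by positivity
  have hDf : Dfun ((a+1)/p) ≠ 0 := by
    unfold Dfun; positivity
  have hDn : Real.sqrt (2 * Real.pi / p) * a ^ (1/p - 1/2) * a ^ (a/p) * Real.exp (-a/p) ≠ 0 := by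
    have h2p : (0:ℝ) < 2 * Real.pi / p := by positivity
    positivity
  rw [Jint_eq hp (by linarith), div_mul_eq_mul_div, div_eq_div_iff hDf hDn]
  linear_combination -Real.Gamma ((a+1)/p) * key_ident hp ha
end

section
/- For every p > 0 and every δ > 0 there exist positive constants C'(p,δ) and C''(p,δ) such that for all n ≥ 2, (1/J_{n−1,p}) · ∫_{(1+δ)(n−1)^{1/p}}^∞ t^{n+p−2} e^{−t^p/p} dt ≤ C'(p,δ) e^{−C''(p,δ) n}. -/
open MeasureTheory Real Set Filter Topology

set_option maxHeartbeats 1000000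

lemma integrableOn_jint {p a : ℝ} (hp : 0 < p) (ha : -1 < a) :
    IntegrableOn (fun t : ℝ => t ^ a * Real.exp (-(t ^ p) / p)) (Ioi 0) := by
  have hb : (0:ℝ) < 1/p := by positivity
  have hs : (-1:ℝ) < (a+1)/p - 1 := by
    have : 0 < (a+1)/p := div_pos (by linarith) hp
    linarith
  have h1 : IntegrableOn (fun y : ℝ => y ^ ((a+1)/p - 1) * Real.exp (-(1/p) * y)) (Ioi 0) := by
    have h := integrableOn_rpow_mul_exp_neg_mul_rpow hs zero_lt_one hb
    exact h.congr_fun (fun y hy => by beta_reduce; rw [Real.rpow_one]) measurableSet_Ioi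
  have h2 := (integrableOn_Ioi_comp_rpow_iff'
      (fun y : ℝ => y ^ ((a+1)/p - 1) * Real.exp (-(1/p) * y)) hp.ne').mpr h1
  refine h2.congr_fun (fun t ht => ?_) measurableSet_Ioi
  have ht0 : (0:ℝ) < t := ht
  have h3 : (t ^ p) ^ ((a+1)/p - 1) = t ^ (a + 1 - p) := by
    rw [← Real.rpow_mul ht0.le]
    congr 1
    field_simp
  beta_reduce
  rw [smul_eq_mul, h3, ← mul_assoc, ← Real.rpow_add ht0]
  rw [show p - 1 + (a + 1 - p) = a by ring, show -(1/p) * t ^ p = -(t ^ p)/p by ring]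

lemma tail_ftc {p b x : ℝ} (hp : 0 < p) (hb : 0 < b) (hx : 0 < x) :
    IntegrableOn (fun t : ℝ => t ^ (p-1) * Real.exp (-b * t ^ p)) (Ioi x) ∧
    ∫ t in Ioi x, t ^ (p-1) * Real.exp (-b * t ^ p) = Real.exp (-b * x ^ p) / (b * p) := by
  have hderiv : ∀ t ∈ Ici x, HasDerivAt (fun t : ℝ => -(1/(b*p)) * Real.exp (-b * t ^ p))
      (t ^ (p-1) * Real.exp (-b * t ^ p)) t := by
    intro t ht
    have ht0 : 0 < t := lt_of_lt_of_le hx ht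
    have h1 : HasDerivAt (fun t : ℝ => t ^ p) (p * t ^ (p-1)) t :=
      Real.hasDerivAt_rpow_const (Or.inl ht0.ne')
    have h2 : HasDerivAt (fun t : ℝ => -b * t ^ p) (-b * (p * t ^ (p-1))) t := h1.const_mul (-b)
    have h3 := (h2.exp).const_mul (-(1/(b*p)))
    refine h3.congr_deriv ?_
    field_simp
  have hpos : ∀ t ∈ Ioi x, 0 ≤ t ^ (p-1) * Real.exp (-b * t ^ p) := by
    intro t ht
    have ht0 : 0 < t := lt_trans hx ht
    positivity
  have htend : Tendsto (fun t : ℝ => -(1/(b*p)) * Real.exp (-b * t ^ p)) atTop (𝓝 0) := by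
    have h4 : Tendsto (fun t : ℝ => t ^ p) atTop atTop := tendsto_rpow_atTop hp
    have h5 : Tendsto (fun t : ℝ => -b * t ^ p) atTop atBot :=
      h4.const_mul_atTop_of_neg (by linarith)
    have h6 : Tendsto (fun t : ℝ => Real.exp (-b * t ^ p)) atTop (𝓝 0) :=
      Real.tendsto_exp_atBot.comp h5
    have h7 := h6.const_mul (-(1/(b*p)))
    simpa using h7
  refine ⟨integrableOn_Ioi_deriv_of_nonneg' hderiv hpos htend, ?_⟩
  rw [integral_Ioi_of_hasDerivAt_of_nonneg' hderiv hpos htend]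
  field_simp
  ring

theorem tail_integral_exponentially_small (p : ℝ) (hp : 0 < p) (δ : ℝ) (hδ : 0 < δ) :
    ∃ C' > (0:ℝ), ∃ C'' > (0:ℝ), ∀ n : ℕ, 2 ≤ n →
      (1 / Jint p ((n:ℝ) - 1)) *
          (∫ t in Ioi ((1 + δ) * ((n:ℝ) - 1) ^ (1/p)), t ^ ((n:ℝ) + p - 2) * Real.exp (-(t ^ p) / p))
        ≤ C' * Real.exp (-C'' * n) := by
  have hc : (1:ℝ) < 1 + δ := by linarith
  set c : ℝ := 1 + δ with hcdef
  have hc0 : (0:ℝ) < c := by linarith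
  have hlc : 0 < Real.log c := Real.log_pos hc
  set η : ℝ := (c ^ p - 1 - p * Real.log c) / 2 with hηdef
  have hcp : c ^ p = Real.exp (p * Real.log c) := by
    rw [Real.rpow_def_of_pos hc0, mul_comm]
  have hη0 : 0 < η := by
    have h := Real.add_one_lt_exp (x := p * Real.log c) (by positivity : (0:ℝ) < p * Real.log c).ne'
    rw [hηdef, hcp]; linarith
  set L : ℝ := (1+η) ^ (1/p) - 1 with hLdef
  have hL0 : 0 < L := by
    have h : (1:ℝ) < (1+η) ^ (1/p) :=
      (Real.one_lt_rpow_iff_of_pos (by linarith)).mpr (Or.inl ⟨by linarith, by positivity⟩)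
    simp only [hLdef]; linarith
  set D : ℝ := 1 - c ^ (-p) with hDdef
  have hcpn : c ^ (-p) < 1 := Real.rpow_lt_one_of_one_lt_of_neg hc (by linarith)
  have hcpn0 : 0 < c ^ (-p) := Real.rpow_pos_of_pos hc0 _
  have hD0 : 0 < D := by simp only [hDdef]; linarith
  have hD1 : D < 1 := by simp only [hDdef]; linarith
  have hcc : c ^ (-p) * c ^ p = 1 := by
    rw [← Real.rpow_add hc0]; simp
  have hDc : D * c ^ p = c ^ p - 1 := by
    rw [hDdef, sub_mul, one_mul, hcc]
  have hcp0 : (0:ℝ) < c ^ p := Real.rpow_pos_of_pos hc0 _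
  refine ⟨1/(L*D), by positivity, η/(2*p), by positivity, ?_⟩
  intro n hn
  have hn2 : (2:ℝ) ≤ (n:ℝ) := by exact_mod_cast hn
  set a : ℝ := (n:ℝ) - 1 with hadef
  have ha1 : 1 ≤ a := by simp only [hadef]; linarith
  have ha0 : 0 < a := by linarith
  have han : (n:ℝ)/2 ≤ a := by simp only [hadef]; linarith
  set x : ℝ := c * a ^ (1/p) with hxdef
  have hax : 0 < a ^ (1/p) := Real.rpow_pos_of_pos ha0 _
  have hax1 : 1 ≤ a ^ (1/p) := Real.one_le_rpow ha1 (by positivity)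
  have hx0 : 0 < x := by positivity
  have haxp : (a ^ (1/p)) ^ p = a := by
    rw [← Real.rpow_mul ha0.le, one_div_mul_cancel hp.ne', Real.rpow_one]
  have hxp : x ^ p = c ^ p * a := by
    rw [hxdef, Real.mul_rpow hc0.le hax.le, haxp]
  have hb0 : 0 < D/p := by positivity
  obtain ⟨hint_tail, hval_tail⟩ := tail_ftc hp hb0 hx0
  -- pointwise bound on the tail integrand
  set K : ℝ := x ^ a * Real.exp (-(a/p)) with hKdef
  have hK0 : 0 < K := by
    have := Real.rpow_pos_of_pos hx0 a
    positivity
  have hptwise : ∀ t ∈ Ioi x, t ^ ((n:ℝ) + p - 2) * Real.exp (-(t ^ p) / p)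
      ≤ K * (t ^ (p-1) * Real.exp (-(D/p) * t ^ p)) := by
    intro t ht
    have htx : x ≤ t := le_of_lt ht
    have ht0 : 0 < t := lt_of_lt_of_le hx0 htx
    have hexp2 : (n:ℝ) + p - 2 = a + (p-1) := by simp only [hadef]; ring
    rw [hexp2, Real.rpow_add ht0]
    have key : t ^ a * Real.exp (-(t ^ p) / p)
        ≤ x ^ a * Real.exp (-(a/p)) * Real.exp (-(D/p) * t ^ p) := by
      have hlog : Real.log x ≤ Real.log t := (Real.log_le_log_iff hx0 ht0).mpr htx
      have hu0 : 0 < t ^ p := Real.rpow_pos_of_pos ht0 p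
      have hv0 : 0 < x ^ p := Real.rpow_pos_of_pos hx0 p
      have h1 : Real.exp (p * (Real.log t - Real.log x)) = t ^ p / x ^ p := by
        rw [Real.rpow_def_of_pos ht0, Real.rpow_def_of_pos hx0, ← Real.exp_sub]
        congr 1; ring
      have h2 := Real.add_one_le_exp (p * (Real.log t - Real.log x))
      rw [h1] at h2
      have hs : (p * (Real.log t - Real.log x) + 1) * x ^ p ≤ t ^ p := by
        calc (p * (Real.log t - Real.log x) + 1) * x ^ p
            ≤ (t ^ p / x ^ p) * x ^ p := mul_le_mul_of_nonneg_right h2 hv0.le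
          _ = t ^ p := div_mul_cancel₀ _ hv0.ne'
      have h1D : (1 - D) * x ^ p = a := by
        rw [hDdef, hxp, sub_sub_cancel, ← mul_assoc, hcc, one_mul]
      rw [Real.rpow_def_of_pos ht0 a, Real.rpow_def_of_pos hx0 a, ← Real.exp_add,
        ← Real.exp_add, ← Real.exp_add]
      apply Real.exp_le_exp.mpr
      rw [← sub_nonneg]
      have hG : 0 ≤ (Real.log x * a + -(a/p) + -(D/p) * t ^ p
          - (Real.log t * a + -(t ^ p) / p)) * p := by
        have hexpand : (Real.log x * a + -(a/p) + -(D/p) * t ^ p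
            - (Real.log t * a + -(t ^ p) / p)) * p
            = (1-D) * (t ^ p - x ^ p - (p * (Real.log t - Real.log x)) * x ^ p) := by
          rw [← h1D]; field_simp; ring
        rw [hexpand]
        have := mul_nonneg (by linarith : (0:ℝ) ≤ 1 - D)
          (by nlinarith [hs] : (0:ℝ) ≤ t ^ p - x ^ p - (p * (Real.log t - Real.log x)) * x ^ p)
        linarith
      nlinarith [hG, hp]
    have htp1 : (0:ℝ) ≤ t ^ (p-1) := (Real.rpow_pos_of_pos ht0 (p-1)).le
    have h := mul_le_mul_of_nonneg_left key htp1
    calc t ^ a * t ^ (p-1) * Real.exp (-(t ^ p) / p)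
        = t ^ (p-1) * (t ^ a * Real.exp (-(t ^ p) / p)) := by ring
      _ ≤ t ^ (p-1) * (x ^ a * Real.exp (-(a/p)) * Real.exp (-(D/p) * t ^ p)) := h
      _ = K * (t ^ (p-1) * Real.exp (-(D/p) * t ^ p)) := by rw [hKdef]; ring
  -- upper bound on the tail integral
  have hTub : (∫ t in Ioi x, t ^ ((n:ℝ) + p - 2) * Real.exp (-(t ^ p) / p))
      ≤ K * (Real.exp (-(D/p) * x ^ p) / D) := by
    have hInt : Integrable (fun t : ℝ => K * (t ^ (p-1) * Real.exp (-(D/p) * t ^ p)))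
        (volume.restrict (Ioi x)) := hint_tail.const_mul K
    have hmono := integral_mono_of_nonneg
      (f := fun t : ℝ => t ^ ((n:ℝ) + p - 2) * Real.exp (-(t ^ p) / p))
      (g := fun t : ℝ => K * (t ^ (p-1) * Real.exp (-(D/p) * t ^ p)))
      (μ := volume.restrict (Ioi x))
      ((ae_restrict_mem measurableSet_Ioi).mono (fun t ht => by
        have ht0 : 0 < t := lt_trans hx0 ht
        positivity))
      hInt
      ((ae_restrict_mem measurableSet_Ioi).mono (fun t ht => hptwise t ht))
    rw [integral_const_mul, hval_tail] at hmono
    have hDp : D/p * p = D := div_mul_cancel₀ D hp.ne'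
    rw [hDp] at hmono
    exact hmono
  -- lower bound on Jint
  set y1 : ℝ := a ^ (1/p) with hy1def
  set y2 : ℝ := ((1+η)*a) ^ (1/p) with hy2def
  have hy10 : 0 < y1 := hax
  have hy20 : 0 < y2 := Real.rpow_pos_of_pos (by nlinarith) _
  have hy12 : y1 ≤ y2 := Real.rpow_le_rpow ha0.le (by nlinarith) (by positivity)
  have hy2p : y2 ^ p = (1+η)*a := by
    rw [hy2def, ← Real.rpow_mul (by nlinarith : (0:ℝ) ≤ (1+η)*a),
      one_div_mul_cancel hp.ne', Real.rpow_one]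
  have hy2split : y2 = (1+η) ^ (1/p) * y1 := by
    rw [hy2def, hy1def, Real.mul_rpow (by linarith : (0:ℝ) ≤ 1+η) ha0.le]
  set m : ℝ := y1 ^ a * Real.exp (-((1+η)*a)/p) with hmdef
  have hm0 : 0 < m := by
    have := Real.rpow_pos_of_pos hy10 a
    positivity
  have hsub : Ioc y1 y2 ⊆ Ioi (0:ℝ) := fun z hz => lt_trans hy10 hz.1
  have hJint := integrableOn_jint hp (by linarith : (-1:ℝ) < a)
  have hJ1 : (∫ t in Ioc y1 y2, t ^ a * Real.exp (-(t ^ p) / p)) ≤ Jint p a := by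
    refine setIntegral_mono_set hJint ?_ (HasSubset.Subset.eventuallyLE hsub)
    exact (ae_restrict_mem measurableSet_Ioi).mono (fun t ht => by
      have ht0 : 0 < t := ht
      positivity)
  have hJ2 : m * (y2 - y1) ≤ ∫ t in Ioc y1 y2, t ^ a * Real.exp (-(t ^ p) / p) := by
    have hconst : (∫ _ in Ioc y1 y2, m) = (y2 - y1) * m := by
      rw [setIntegral_const, Real.volume_real_Ioc_of_le (by linarith), smul_eq_mul]
    have hmono : (∫ _ in Ioc y1 y2, m) ≤ ∫ t in Ioc y1 y2, t ^ a * Real.exp (-(t ^ p) / p) := by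
      refine setIntegral_mono_on (Iff.mpr integrableOn_const_iff (Or.inr ?_))
        (hJint.mono_set hsub) measurableSet_Ioc (fun t ht => ?_)
      · exact measure_Ioc_lt_top
      · have ht0 : 0 < t := lt_trans hy10 ht.1
        have h1 : y1 ^ a ≤ t ^ a := Real.rpow_le_rpow hy10.le ht.1.le ha0.le
        have h2 : t ^ p ≤ (1+η)*a := by
          rw [← hy2p]; exact Real.rpow_le_rpow ht0.le ht.2 hp.le
        have h3 : Real.exp (-((1+η)*a)/p) ≤ Real.exp (-(t ^ p)/p) := by
          apply Real.exp_le_exp.mpr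
          rw [neg_div, neg_div]
          exact neg_le_neg ((div_le_div_iff_of_pos_right hp).mpr h2)
        rw [hmdef]
        exact mul_le_mul h1 h3 (Real.exp_pos _).le (Real.rpow_pos_of_pos ht0 a).le
    linarith [hconst, hmono]
  have hLm : L * m ≤ Jint p a := by
    have h1 : L ≤ y2 - y1 := by
      have e1 : y2 - y1 = L * y1 := by rw [hy2split, hLdef]; ring
      rw [e1]
      calc L = L * 1 := (mul_one L).symm
        _ ≤ L * y1 := mul_le_mul_of_nonneg_left hax1 hL0.le
    linarith [hJ1, hJ2, mul_le_mul_of_nonneg_right h1 hm0.le]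
  have hJpos : 0 < Jint p a := lt_of_lt_of_le (by positivity) hLm
  -- combine
  have hT0 : 0 ≤ ∫ t in Ioi x, t ^ ((n:ℝ) + p - 2) * Real.exp (-(t ^ p) / p) := by
    refine setIntegral_nonneg measurableSet_Ioi (fun t ht => ?_)
    have ht0 : 0 < t := lt_trans hx0 ht
    positivity
  have step1 : (1 / Jint p a) * (∫ t in Ioi x, t ^ ((n:ℝ) + p - 2) * Real.exp (-(t ^ p) / p))
      ≤ (1 / (L*m)) * (K * (Real.exp (-(D/p) * x ^ p) / D)) := by
    have h1 : 1 / Jint p a ≤ 1 / (L*m) := by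
      apply one_div_le_one_div_of_le (by positivity) hLm
    calc (1 / Jint p a) * (∫ t in Ioi x, t ^ ((n:ℝ) + p - 2) * Real.exp (-(t ^ p) / p))
        ≤ (1 / (L*m)) * (∫ t in Ioi x, t ^ ((n:ℝ) + p - 2) * Real.exp (-(t ^ p) / p)) :=
          mul_le_mul_of_nonneg_right h1 hT0
      _ ≤ (1 / (L*m)) * (K * (Real.exp (-(D/p) * x ^ p) / D)) :=
          mul_le_mul_of_nonneg_left hTub (by positivity)
  have step2 : (1 / (L*m)) * (K * (Real.exp (-(D/p) * x ^ p) / D))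
      ≤ 1/(L*D) * Real.exp (-(η/(2*p)) * n) := by
    have hxa : x ^ a = Real.exp (Real.log c * a) * y1 ^ a := by
      rw [hxdef, Real.mul_rpow hc0.le hax.le, Real.rpow_def_of_pos hc0]
    have hy1a : 0 < y1 ^ a := Real.rpow_pos_of_pos hy10 a
    have hLHS : (1 / (L*m)) * (K * (Real.exp (-(D/p) * x ^ p) / D))
        = 1/(L*D) * Real.exp (Real.log c * a + -(a/p) + -(D/p) * x ^ p + ((1+η)*a)/p) := by
      rw [hmdef, hKdef, hxa, Real.exp_add, Real.exp_add, Real.exp_add]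
      rw [neg_div]
      simp only [Real.exp_neg]
      field_simp
    rw [hLHS]
    have hE : Real.log c * a + -(a/p) + -(D/p) * x ^ p + ((1+η)*a)/p ≤ -(η/(2*p)) * n := by
      have hlogc : Real.log c = (c ^ p - 1 - 2*η)/p := by
        rw [hηdef]; field_simp; ring
      have h11 : -(D/p) * x ^ p = -((c ^ p - 1) * a)/p := by
        rw [hxp]; linear_combination (-(a/p)) * hDc
      have h13 : Real.log c * a = (c ^ p - 1 - 2*η)/p * a := by rw [hlogc]
      have h9 : (c ^ p - 1 - 2*η)/p * a + -(a/p) + -((c ^ p - 1)*a)/p + ((1+η)*a)/p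
          = -(η*a)/p := by ring
      have h12 : η * ((n:ℝ)/2) ≤ η * a := mul_le_mul_of_nonneg_left han hη0.le
      have h10 : -(η*a)/p ≤ -(η/(2*p)) * (n:ℝ) := by
        have h14 : -(η*a) ≤ -(η*((n:ℝ)/2)) := neg_le_neg h12
        calc -(η*a)/p ≤ -(η*((n:ℝ)/2))/p := (div_le_div_iff_of_pos_right hp).mpr h14
          _ = -(η/(2*p)) * (n:ℝ) := by ring
      linarith [h11, h13, h9, h10]
    exact mul_le_mul_of_nonneg_left (Real.exp_le_exp.mpr hE) (by positivity)
  exact le_trans step1 step2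
end

section
/- Let p > 0, s > 0, and α ∈ [0,1]. Set t_1 = √(α²s² − s² + (s^p + 1)^{2/p}) − αs. Then t_1 > 0, the identity (s² + t_1² + 2 t_1 s α)^{p/2} = s^p + 1 holds, and ∫_0^∞ exp(−(s² + t² + 2 t s α)^{p/2}/p) dt ≥ e^{−(s^p+1)/p} · t_1. -/
open MeasureTheory Real Set

/-- Integrability of `exp (-x^p / p)` on `(0, ∞)` for any `p > 0`. -/
lemma integrableOn_exp_neg_rpow_div {p : ℝ} (hp : 0 < p) :
    IntegrableOn (fun x : ℝ => Real.exp (-(x ^ p) / p)) (Ioi 0) := by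
  have h1 : IntegrableOn (fun y : ℝ => y ^ ((1 - p) / p) * Real.exp (-(1/p) * y ^ (1:ℝ)))
      (Ioi 0) := by
    refine integrableOn_rpow_mul_exp_neg_mul_rpow ?_ one_pos (by positivity)
    have h : 0 < 1 / p := by positivity
    have h' : (1 - p) / p = 1/p - 1 := by field_simp
    rw [h']; linarith
  have h2 := (integrableOn_Ioi_comp_rpow_iff'
      (fun y : ℝ => y ^ ((1 - p) / p) * Real.exp (-(1/p) * y ^ (1:ℝ))) hp.ne').mpr h1
  refine h2.congr_fun (fun x hx => ?_) measurableSet_Ioi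
  have hx0 : (0:ℝ) < x := hx
  have e1 : (x ^ p) ^ ((1 - p) / p) = x ^ (1 - p) := by
    rw [← Real.rpow_mul hx0.le]; congr 1; field_simp
  dsimp only
  rw [smul_eq_mul, Real.rpow_one, e1, ← mul_assoc, ← Real.rpow_add hx0,
    show p - 1 + (1 - p) = 0 by ring, Real.rpow_zero, one_mul]
  congr 1; ring

theorem second_coordinate_system_estimate (p s α : ℝ) (hp : 0 < p) (hs : 0 < s)
    (hα : α ∈ Icc (0:ℝ) 1) :
    0 < Real.sqrt (α^2 * s^2 - s^2 + (s^p + 1) ^ (2/p)) - α * s ∧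
    (s^2 + (Real.sqrt (α^2 * s^2 - s^2 + (s^p + 1) ^ (2/p)) - α * s)^2 +
        2 * (Real.sqrt (α^2 * s^2 - s^2 + (s^p + 1) ^ (2/p)) - α * s) * s * α) ^ (p/2)
      = s^p + 1 ∧
    Real.exp (-(s^p + 1) / p) *
        (Real.sqrt (α^2 * s^2 - s^2 + (s^p + 1) ^ (2/p)) - α * s)
      ≤ ∫ t in Ioi (0:ℝ), Real.exp (-((s^2 + t^2 + 2*t*s*α) ^ (p/2)) / p) := by
  obtain ⟨hα0, hα1⟩ := hα
  have hsp : (0:ℝ) < s ^ p := Real.rpow_pos_of_pos hs p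
  have hkey : s ^ 2 < (s ^ p + 1) ^ (2/p) := by
    have h1 : (s ^ p) ^ (2/p) < (s ^ p + 1) ^ (2/p) :=
      Real.rpow_lt_rpow hsp.le (by linarith) (by positivity)
    have h2 : (s ^ p) ^ (2/p) = s ^ 2 := by
      rw [← Real.rpow_natCast s 2, ← Real.rpow_mul hs.le]
      congr 1
      push_cast
      field_simp
    rwa [h2] at h1
  set A := α^2 * s^2 - s^2 + (s^p + 1) ^ (2/p) with hA
  have hApos : α^2 * s^2 < A := by simp only [hA]; nlinarith
  have hA0 : 0 ≤ A := le_trans (by positivity) hApos.le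
  have hsqA : Real.sqrt A ^ 2 = A := Real.sq_sqrt hA0
  have hT : α * s < Real.sqrt A := by
    nlinarith [Real.sqrt_nonneg A, Real.sq_sqrt hA0, mul_nonneg hα0 hs.le]
  set T := Real.sqrt A - α * s with hTdef
  have hTpos : 0 < T := by simp only [hTdef]; linarith
  -- part 2
  have hbase : s^2 + T^2 + 2*T*s*α = (s^p + 1) ^ (2/p) := by
    have h : T^2 + 2*T*s*α = A - α^2*s^2 := by
      simp only [hTdef]; nlinarith [hsqA]
    rw [hA] at h; linarith
  have hpart2 : (s^2 + T^2 + 2*T*s*α) ^ (p/2) = s^p + 1 := by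
    rw [hbase, ← Real.rpow_mul (by positivity)]
    rw [show (2/p) * (p/2) = 1 by field_simp]
    exact Real.rpow_one _
  refine ⟨hTpos, hpart2, ?_⟩
  -- integrability
  have hmeas : AEStronglyMeasurable
      (fun t : ℝ => Real.exp (-((s^2 + t^2 + 2*t*s*α) ^ (p/2)) / p))
      (volume.restrict (Ioi (0:ℝ))) := by
    apply Measurable.aestronglyMeasurable
    fun_prop
  have hint : IntegrableOn (fun t : ℝ => Real.exp (-((s^2 + t^2 + 2*t*s*α) ^ (p/2)) / p))
      (Ioi 0) := by
    refine Integrable.mono' (integrableOn_exp_neg_rpow_div hp) hmeas ?_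
    filter_upwards [ae_restrict_mem measurableSet_Ioi] with t ht
    have ht0 : (0:ℝ) < t := ht
    rw [Real.norm_eq_abs, abs_of_pos (Real.exp_pos _), Real.exp_le_exp]
    have h1 : t ^ p ≤ (s^2 + t^2 + 2*t*s*α) ^ (p/2) := by
      have h2 : t^2 ≤ s^2 + t^2 + 2*t*s*α := by
        nlinarith [mul_nonneg (mul_nonneg ht0.le hs.le) hα0, sq_nonneg s]
      have h3 : (t^2 : ℝ) ^ (p/2) ≤ (s^2 + t^2 + 2*t*s*α) ^ (p/2) :=
        Real.rpow_le_rpow (by positivity) h2 (by positivity)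
      have h4 : (t^2 : ℝ) ^ (p/2) = t ^ p := by
        rw [← Real.rpow_natCast t 2, ← Real.rpow_mul ht0.le]
        congr 1
        push_cast
        ring
      rwa [h4] at h3
    gcongr
  -- lower bound
  have hsub : ∫ t in Ioc (0:ℝ) T, Real.exp (-((s^2 + t^2 + 2*t*s*α) ^ (p/2)) / p)
      ≤ ∫ t in Ioi (0:ℝ), Real.exp (-((s^2 + t^2 + 2*t*s*α) ^ (p/2)) / p) := by
    refine setIntegral_mono_set hint ?_ ?_
    · filter_upwards with t using (Real.exp_pos _).le
    · filter_upwards with t ht using ht.1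
  have hconst : Real.exp (-(s^p + 1) / p) * T
      ≤ ∫ t in Ioc (0:ℝ) T, Real.exp (-((s^2 + t^2 + 2*t*s*α) ^ (p/2)) / p) := by
    have hvol : (volume (Ioc (0:ℝ) T)).toReal = T := by
      rw [Real.volume_Ioc, sub_zero, ENNReal.toReal_ofReal hTpos.le]
    have hb := setIntegral_ge_of_const_le (c := Real.exp (-(s^p + 1) / p))
      (s := Ioc (0:ℝ) T) (measurableSet_Ioc)
      (by rw [Real.volume_Ioc]; exact ENNReal.ofReal_ne_top)
      (f := fun t => Real.exp (-((s^2 + t^2 + 2*t*s*α) ^ (p/2)) / p))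
      ?_ (hint.mono_set Ioc_subset_Ioi_self)
    · rwa [measureReal_def, hvol, smul_eq_mul, mul_comm] at hb
    · intro t ht
      have hX : (s^2 + t^2 + 2*t*s*α) ^ (p/2) ≤ s^p + 1 := by
        rw [← hpart2]
        apply Real.rpow_le_rpow
        · nlinarith [ht.1, mul_nonneg (mul_nonneg ht.1.le hs.le) hα0, sq_nonneg s]
        · nlinarith [ht.1, ht.2, mul_nonneg hs.le hα0]
        · positivity
      rw [Real.exp_le_exp]
      gcongr
  linarith
end
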